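/- arXiv:2506.17229 — 13 statements merged into one kernel-verified Lean document; each statement's English description precedes it below -/
import Mathlib

section
/- For every σ > 0 and κ > 0, the negative derivative of the log-density of the coupled exponential (generalized Pareto) density evaluated at the scale equals the inverse scale: −(d/dx)[ln p(x)] evaluated at x = σ equals 1/σ, where p(x) = (1/σ)·(1 + κ·x/σ)^(−(1+κ)/κ). -/
open Real

/-- The negative derivative of the log-density of the coupled exponential
(generalized Pareto) density `p(x) = (1/σ)·(1 + κ·x/σ)^(−(1+κ)/κ)`, evaluated at
the scale `x = σ`, equals the inverse scale `1/σ`. -/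
theorem stmt_3 (σ κ : ℝ) (hσ : 0 < σ) (hκ : 0 < κ) :
    -(deriv (fun x : ℝ =>
        Real.log ((1 / σ) * (1 + κ * x / σ) ^ (-(1 + κ) / κ))) σ)
      = 1 / σ := by
  have heq : (fun x : ℝ =>
      Real.log ((1 / σ) * (1 + κ * x / σ) ^ (-(1 + κ) / κ)))
      =ᶠ[nhds σ] (fun x : ℝ =>
      Real.log (1 / σ) + (-(1 + κ) / κ) * Real.log (1 + κ * x / σ)) := by
    have hopen : IsOpen {x : ℝ | 0 < 1 + κ * x / σ} :=
      isOpen_lt continuous_const (by continuity)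
    have hmem : σ ∈ {x : ℝ | 0 < 1 + κ * x / σ} := by
      simp only [Set.mem_setOf_eq]
      have : κ * σ / σ = κ := by field_simp
      rw [this]; linarith
    filter_upwards [hopen.mem_nhds hmem] with x hx
    rw [Real.log_mul (by positivity) (ne_of_gt (Real.rpow_pos_of_pos hx _)),
      Real.log_rpow hx]
  rw [Filter.EventuallyEq.deriv_eq heq]
  have h1 : HasDerivAt (fun x : ℝ => 1 + κ * x / σ) (κ / σ) σ := by
    simpa [mul_div_assoc, div_eq_mul_inv, mul_assoc] using
      (((hasDerivAt_id σ).div_const σ).const_mul κ).const_add 1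
  have hpos : (0 : ℝ) < 1 + κ * σ / σ := by
    have : κ * σ / σ = κ := by field_simp
    rw [this]; linarith
  have h2 : HasDerivAt (fun x : ℝ => Real.log (1 + κ * x / σ))
      ((1 + κ * σ / σ)⁻¹ * (κ / σ)) σ :=
    by have := (Real.hasDerivAt_log (ne_of_gt hpos)).comp σ h1; exact this
  have h3 : HasDerivAt (fun x : ℝ =>
      Real.log (1 / σ) + (-(1 + κ) / κ) * Real.log (1 + κ * x / σ))
      ((-(1 + κ) / κ) * ((1 + κ * σ / σ)⁻¹ * (κ / σ))) σ :=
    (h2.const_mul _).const_add _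
  rw [h3.deriv]
  have hσσ : κ * σ / σ = κ := by field_simp
  rw [hσσ]
  field_simp
end

section
/- For every σ > 0 and κ > 0, the independent-equals normalization of the coupled exponential density satisfies ∫₀^∞ p(x)^((1+2κ)/(1+κ)) dx = σ^(−κ/(1+κ))/(1+κ), where p(x) = (1/σ)·(1 + κ·x/σ)^(−(1+κ)/κ). -/
open Real MeasureTheory

/-- The independent-equals normalization of the coupled exponential density:
`∫₀^∞ p(x)^((1+2κ)/(1+κ)) dx = σ^(−κ/(1+κ))/(1+κ)` where
`p(x) = (1/σ)·(1 + κ·x/σ)^(−(1+κ)/κ)`. -/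
theorem stmt_5 (σ κ : ℝ) (hσ : 0 < σ) (hκ : 0 < κ) :
    (∫ x in Set.Ioi (0 : ℝ),
        ((1 / σ) * (1 + κ * x / σ) ^ (-(1 + κ) / κ)) ^ ((1 + 2 * κ) / (1 + κ)))
      = σ ^ (-κ / (1 + κ)) / (1 + κ) := by
  have hκσ : (0:ℝ) < κ / σ := div_pos hκ hσ
  have h1κ : (0:ℝ) < 1 + κ := by linarith
  set q : ℝ := (1 + 2 * κ) / (1 + κ) with hq
  set e : ℝ := -(1 + 2 * κ) / κ with he
  have he1 : e < -1 := by
    rw [he, div_lt_iff₀ hκ]; nlinarith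
  have hstep : ∀ x ∈ Set.Ioi (0:ℝ),
      ((1 / σ) * (1 + κ * x / σ) ^ (-(1 + κ) / κ)) ^ q
        = σ ^ (-q) * (1 + (κ / σ) * x) ^ e := by
    intro x hx
    have hx0 : (0:ℝ) < x := hx
    have hb : (0:ℝ) ≤ 1 + κ * x / σ := by positivity
    rw [Real.mul_rpow (by positivity) (Real.rpow_nonneg hb _),
        ← Real.rpow_mul hb]
    have h1 : (1:ℝ) / σ = σ ^ (-1 : ℝ) := by
      rw [Real.rpow_neg_one]; ring
    have h2 : -(1 + κ) / κ * q = e := by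
      rw [hq, he]; field_simp
    have h3 : κ * x / σ = (κ / σ) * x := by ring
    rw [h1, ← Real.rpow_mul hσ.le, neg_one_mul, h2, h3]
  rw [setIntegral_congr_fun measurableSet_Ioi hstep]
  have hcomp := integral_comp_mul_left_Ioi
      (fun y : ℝ => σ ^ (-q) * (1 + y) ^ e) 0 hκσ
  simp only [mul_zero] at hcomp
  rw [hcomp]
  have htrans : (∫ y in Set.Ioi (0:ℝ), σ ^ (-q) * (1 + y) ^ e)
      = ∫ u in Set.Ioi (1:ℝ), σ ^ (-q) * u ^ e := by
    rw [← integral_indicator measurableSet_Ioi, ← integral_indicator measurableSet_Ioi,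
        ← integral_add_left_eq_self
          (fun u : ℝ => (Set.Ioi (1:ℝ)).indicator (fun u => σ ^ (-q) * u ^ e) u) 1]
    congr 1
    ext x
    by_cases hx : 0 < x
    · rw [Set.indicator_of_mem (by simpa using hx),
          Set.indicator_of_mem (by simpa using hx : (1:ℝ) + x ∈ Set.Ioi 1)]
    · rw [Set.indicator_of_notMem (by simpa using hx),
          Set.indicator_of_notMem (by simp; linarith [not_lt.mp hx])]
  rw [htrans, integral_const_mul, integral_Ioi_rpow_of_lt he1 zero_lt_one]
  rw [Real.one_rpow]
  have hσq : σ ^ (-q) = σ ^ (-κ / (1 + κ)) / σ := by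
    rw [eq_div_iff hσ.ne']
    rw [← Real.rpow_add_one hσ.ne']
    congr 1
    rw [hq]; field_simp; ring
  have hee : e + 1 = -(1 + κ) / κ := by
    rw [he]; field_simp; ring
  have h5 : (-1 : ℝ) / (-(1 + κ) / κ) = κ / (1 + κ) := by
    rw [div_div_eq_mul_div, neg_one_mul, neg_div, div_neg, neg_neg]
  rw [hσq, hee, h5, smul_eq_mul]
  rw [div_mul_div_comm, inv_div, div_mul_div_comm]
  rw [div_eq_div_iff (by positivity) h1κ.ne']
  ring
end

section
/- For every σ > 0 and κ > 0, the first independent-equals moment of the coupled exponential density equals its scale: (∫₀^∞ x·p(x)^((1+2κ)/(1+κ)) dx) / (∫₀^∞ p(x)^((1+2κ)/(1+κ)) dx) = σ, where p(x) = (1/σ)·(1 + κ·x/σ)^(−(1+κ)/κ). In particular this generalized mean is finite for every κ > 0, even when κ ≥ 1 and the ordinary mean ∫ x·p(x) dx diverges. -/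
open Real MeasureTheory Set Filter Topology

private lemma cexp_deriv (a t : ℝ) (ha : 0 < a) (ht : t < -1) :
    ∀ x ∈ Ici (0:ℝ), HasDerivAt (fun x => (1 + a*x) ^ (t+1) / (a*(t+1)))
      ((1 + a*x) ^ t) x := by
  intro x hx
  have hz : 0 < 1 + a*x := by nlinarith [hx.out]
  have h1 : HasDerivAt (fun x : ℝ => 1 + a*x) a x := by
    simpa using ((hasDerivAt_id x).const_mul a).const_add 1
  have h2 := ((hasDerivAt_rpow_const (p := t+1) (Or.inl hz.ne')).comp x h1).div_const (a*(t+1))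
  refine h2.congr_deriv (Eq.symm ?_)
  have h3 : (1+a*x) ^ (t+1-1) = (1+a*x) ^ t := by norm_num
  rw [h3, eq_div_iff (mul_ne_zero ha.ne' (by linarith : t+1 ≠ 0))]
  ring

private lemma cexp_tendsto (a t : ℝ) (ha : 0 < a) (ht : t < -1) :
    Tendsto (fun x => (1 + a*x) ^ (t+1) / (a*(t+1))) atTop (𝓝 0) := by
  have h1 : Tendsto (fun x : ℝ => 1 + a*x) atTop atTop :=
    tendsto_atTop_add_const_left _ 1 (tendsto_id.const_mul_atTop ha)
  have h2 := (tendsto_rpow_neg_atTop (show 0 < -(t+1) by linarith)).comp h1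
  simp only [Function.comp, neg_neg] at h2
  simpa using h2.div_const (a*(t+1))

private lemma cexp_integrable (a t : ℝ) (ha : 0 < a) (ht : t < -1) :
    IntegrableOn (fun x => (1 + a*x) ^ t) (Ioi (0:ℝ)) := by
  refine integrableOn_Ioi_deriv_of_nonneg'
    (cexp_deriv a t ha ht) (fun x hx => ?_) (cexp_tendsto a t ha ht)
  have hz : 0 < 1 + a*x := by nlinarith [hx.out]
  exact (rpow_pos_of_pos hz t).le

private lemma cexp_integral (a t : ℝ) (ha : 0 < a) (ht : t < -1) :
    ∫ x in Ioi (0:ℝ), (1 + a*x) ^ t = -1/(a*(t+1)) := by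
  rw [integral_Ioi_of_hasDerivAt_of_tendsto' (cexp_deriv a t ha ht)
    (cexp_integrable a t ha ht) (cexp_tendsto a t ha ht)]
  simp only [mul_zero, add_zero, Real.one_rpow, zero_sub]
  ring

private lemma cexp_integral_x (a t : ℝ) (ha : 0 < a) (ht : t < -2) :
    ∫ x in Ioi (0:ℝ), x * (1 + a*x) ^ t = 1/(a^2*(t+1)*(t+2)) := by
  have ht1 : t < -1 := by linarith
  have ht2 : t + 1 < -1 := by linarith
  have hcongr : ∀ x ∈ Ioi (0:ℝ), x * (1 + a*x) ^ t
      = (1/a) * (1 + a*x) ^ (t+1) - (1/a) * (1 + a*x) ^ t := by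
    intro x hx
    have hz : 0 < 1 + a*x := by nlinarith [hx.out]
    rw [rpow_add_one hz.ne' t]
    field_simp
    ring
  rw [setIntegral_congr_fun measurableSet_Ioi hcongr,
    integral_sub (((cexp_integrable a (t+1) ha ht2)).const_mul _)
      ((cexp_integrable a t ha ht1).const_mul _),
    integral_const_mul, integral_const_mul, cexp_integral a (t+1) ha ht2,
    cexp_integral a t ha ht1]
  have h1 : t + 1 ≠ 0 := ne_of_lt (by linarith)
  have h2 : t + 2 ≠ 0 := ne_of_lt (by linarith)
  rw [show t + 1 + 1 = t + 2 by ring]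
  field_simp
  ring

/-- The first independent-equals moment of the coupled exponential density equals
its scale: `(∫₀^∞ x·p(x)^((1+2κ)/(1+κ)) dx)/(∫₀^∞ p(x)^((1+2κ)/(1+κ)) dx) = σ`,
where `p(x) = (1/σ)·(1 + κ·x/σ)^(−(1+κ)/κ)`.  This generalized mean is finite for
every `κ > 0`, even when the ordinary mean diverges. -/
theorem stmt_6 (σ κ : ℝ) (hσ : 0 < σ) (hκ : 0 < κ) :
    (∫ x in Set.Ioi (0 : ℝ),
        x * ((1 / σ) * (1 + κ * x / σ) ^ (-(1 + κ) / κ)) ^ ((1 + 2 * κ) / (1 + κ))) /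
      (∫ x in Set.Ioi (0 : ℝ),
        ((1 / σ) * (1 + κ * x / σ) ^ (-(1 + κ) / κ)) ^ ((1 + 2 * κ) / (1 + κ)))
      = σ := by
  set a : ℝ := κ/σ with ha_def
  set t : ℝ := -(1+2*κ)/κ with ht_def
  set q : ℝ := (1+2*κ)/(1+κ) with hq_def
  have ha : 0 < a := div_pos hκ hσ
  have hκ1 : (0:ℝ) < 1 + κ := by linarith
  have ht2 : t < -2 := by
    rw [ht_def, div_lt_iff₀ hκ]; nlinarith
  have ht1 : t < -1 := by linarith
  have hpt : ∀ x ∈ Ioi (0:ℝ), ((1 / σ) * (1 + κ * x / σ) ^ (-(1 + κ) / κ)) ^ q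
      = (1/σ)^q * (1 + a*x) ^ t := by
    intro x hx
    have hz : 0 < 1 + κ * x / σ := by
      have : 0 < κ * x / σ := div_pos (mul_pos hκ hx.out) hσ
      linarith
    have hax : 1 + κ * x / σ = 1 + a * x := by rw [ha_def]; ring
    rw [mul_rpow (by positivity) (rpow_pos_of_pos hz _).le]
    congr 1
    rw [← Real.rpow_mul hz.le, hax]
    congr 1
    rw [ht_def, hq_def]
    field_simp
  have hden : (∫ x in Ioi (0:ℝ), ((1 / σ) * (1 + κ * x / σ) ^ (-(1 + κ) / κ)) ^ q)
      = (1/σ)^q * (-1/(a*(t+1))) := by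
    rw [setIntegral_congr_fun measurableSet_Ioi hpt, integral_const_mul,
      cexp_integral a t ha ht1]
  have hnum : (∫ x in Ioi (0:ℝ), x * ((1 / σ) * (1 + κ * x / σ) ^ (-(1 + κ) / κ)) ^ q)
      = (1/σ)^q * (1/(a^2*(t+1)*(t+2))) := by
    have hpt' : ∀ x ∈ Ioi (0:ℝ), x * ((1 / σ) * (1 + κ * x / σ) ^ (-(1 + κ) / κ)) ^ q
        = (1/σ)^q * (x * (1 + a*x) ^ t) := by
      intro x hx
      rw [hpt x hx]; ring
    rw [setIntegral_congr_fun measurableSet_Ioi hpt', integral_const_mul,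
      cexp_integral_x a t ha ht2]
  rw [hnum, hden, mul_div_mul_left _ _ (by positivity : (1/σ)^q ≠ 0)]
  have h1 : t + 1 = -((1+κ)/κ) := by rw [ht_def]; field_simp; ring
  have h2 : t + 2 = -(1/κ) := by rw [ht_def]; field_simp; ring
  rw [h1, h2, ha_def]
  have e1 : 1/((κ/σ)^2 * -((1+κ)/κ) * -(1/κ)) = σ^2/(1+κ) := by
    field_simp
  have e2 : -1/((κ/σ) * -((1+κ)/κ)) = σ/(1+κ) := by
    field_simp
  rw [e1, e2]
  rw [div_div_div_cancel_right₀]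
  · rw [sq, mul_div_assoc, div_self hσ.ne', mul_one]
  · exact hκ1.ne'
end

section
/- For every σ > 0 and κ > 0, the second independent-equals moment of the centered coupled Gaussian density equals its squared scale: (∫_{−∞}^{∞} x²·p(x)^((1+3κ)/(1+κ)) dx) / (∫_{−∞}^{∞} p(x)^((1+3κ)/(1+κ)) dx) = σ², where p(x) = (1/Z)·(1 + κ·(x/σ)²)^(−(1+κ)/(2κ)) and Z = σ·√(π/κ)·Γ(1/(2κ))/Γ((1+κ)/(2κ)). In particular this generalized second moment is finite for every κ > 0, even when the ordinary variance diverges. -/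
open Real MeasureTheory Filter Topology

-- integrability of (1 + b²x²)^(-s) for 2s > 1
lemma aux_int1 {s b : ℝ} (hs : 1 < 2 * s) (hb : b ≠ 0) :
    Integrable (fun x : ℝ => (1 + b ^ 2 * x ^ 2) ^ (-s)) := by
  have h := integrable_rpow_neg_one_add_norm_sq (E := ℝ) (μ := volume) (r := 2 * s)
    (by simpa using hs)
  have h' : Integrable (fun x : ℝ => (1 + x ^ 2) ^ (-s)) := by
    refine h.congr (Eventually.of_forall fun x => ?_)
    simp only [Real.norm_eq_abs, sq_abs]
    congr 1
    ring
  have := h'.comp_mul_left' hb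
  refine this.congr (Eventually.of_forall fun x => ?_)
  ring_nf

lemma aux_cont {s b : ℝ} : Continuous (fun x : ℝ => (1 + b ^ 2 * x ^ 2) ^ (-s)) := by
  apply Continuous.rpow_const (by continuity)
  intro x
  left
  positivity

-- integrability of x² (1 + b²x²)^(-s) for 2s > 3
lemma aux_int2 {s b : ℝ} (hs : 3 < 2 * s) (hb : b ≠ 0) :
    Integrable (fun x : ℝ => x ^ 2 * (1 + b ^ 2 * x ^ 2) ^ (-s)) := by
  have h1 : Integrable (fun x : ℝ => (b ^ 2)⁻¹ * (1 + b ^ 2 * x ^ 2) ^ (-(s - 1))) :=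
    (aux_int1 (by linarith) hb).const_mul _
  refine h1.mono' ?_ (Eventually.of_forall fun x => ?_)
  · exact (continuous_pow 2 |>.mul aux_cont).aestronglyMeasurable
  · have hu : (0:ℝ) < 1 + b ^ 2 * x ^ 2 := by positivity
    have hb2 : (0:ℝ) < b ^ 2 := by positivity
    rw [Real.norm_eq_abs, abs_of_nonneg (by positivity)]
    have key : (1 + b ^ 2 * x ^ 2) ^ (-(s - 1)) =
        (1 + b ^ 2 * x ^ 2) * (1 + b ^ 2 * x ^ 2) ^ (-s) := by
      rw [show -(s-1) = 1 + (-s) by ring, Real.rpow_add hu, Real.rpow_one]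
    rw [key, ← mul_assoc]
    have hr : (0:ℝ) ≤ (1 + b ^ 2 * x ^ 2) ^ (-s) := Real.rpow_nonneg hu.le _
    have hx2 : x ^ 2 ≤ (b ^ 2)⁻¹ * (1 + b ^ 2 * x ^ 2) := by
      rw [le_inv_mul_iff₀ hb2]
      nlinarith
    exact mul_le_mul_of_nonneg_right hx2 hr

lemma aux_tendsto_top {s b : ℝ} (hs : 3 < 2 * s) (hb : 0 < b) :
    Tendsto (fun x : ℝ => x * (1 + b ^ 2 * x ^ 2) ^ (1 - s)) atTop (𝓝 0) := by
  have l1 : Tendsto (fun x : ℝ => x ^ (3 - 2*s)) atTop (𝓝 0) := by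
    rw [show (3 - 2*s) = -(2*s - 3) by ring]
    exact tendsto_rpow_neg_atTop (by linarith)
  have lb : Tendsto (fun x : ℝ => 1 / x ^ 2 + b ^ 2) atTop (𝓝 (0 + b ^ 2)) := by
    refine Tendsto.add_const _ ?_
    have hp : Tendsto (fun x : ℝ => x ^ 2) atTop atTop := tendsto_pow_atTop two_ne_zero
    simpa [one_div, Function.comp_def] using tendsto_inv_atTop_zero.comp hp
  have l2 : Tendsto (fun x : ℝ => (1 / x ^ 2 + b ^ 2) ^ (1 - s)) atTop
      (𝓝 ((0 + b ^ 2) ^ (1 - s))) :=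
    lb.rpow_const (Or.inl (by positivity))
  have := l1.mul l2
  rw [zero_mul] at this
  refine this.congr' ?_
  filter_upwards [eventually_gt_atTop (0:ℝ)] with x hx
  have hx2 : (0:ℝ) < x ^ 2 := by positivity
  have hu : (0:ℝ) < 1 + b ^ 2 * x ^ 2 := by positivity
  have e1 : 1 / x ^ 2 + b ^ 2 = (1 + b ^ 2 * x ^ 2) / x ^ 2 := by field_simp
  rw [e1, Real.div_rpow hu.le hx2.le]
  have e2 : ((x:ℝ) ^ 2) ^ (1 - s) = x ^ (2 * (1 - s)) := by
    rw [← Real.rpow_natCast x 2, ← Real.rpow_mul hx.le]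
    norm_num
  rw [e2, show (3 - 2*s) = 1 + 2*(1-s) by ring, Real.rpow_add hx, Real.rpow_one]
  have h3 : x ^ (2*(1-s)) ≠ 0 := (Real.rpow_pos_of_pos hx _).ne'
  field_simp

lemma aux_key {s b : ℝ} (hs : 3 < 2 * s) (hb : 0 < b) :
    (2 * s - 3) * b ^ 2 * ∫ x : ℝ, x ^ 2 * (1 + b ^ 2 * x ^ 2) ^ (-s)
      = ∫ x : ℝ, (1 + b ^ 2 * x ^ 2) ^ (-s) := by
  have hb' : b ≠ 0 := hb.ne'
  have hi1 := aux_int1 (s := s) (hb := hb') (by linarith)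
  have hi2 := aux_int2 (s := s) (hb := hb') hs
  have hderiv : ∀ x : ℝ, HasDerivAt (fun x : ℝ => x * (1 + b ^ 2 * x ^ 2) ^ (1 - s))
      ((1 + b ^ 2 * x ^ 2) ^ (-s) - (2*s-3) * b ^ 2 * (x ^ 2 * (1 + b ^ 2 * x ^ 2) ^ (-s))) x := by
    intro x
    have hu : (0:ℝ) < 1 + b ^ 2 * x ^ 2 := by positivity
    have h1 : HasDerivAt (fun x : ℝ => 1 + b ^ 2 * x ^ 2) (b ^ 2 * (2 * x)) x := by
      simpa using ((hasDerivAt_pow 2 x).const_mul (b ^ 2)).const_add 1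
    have h2 := h1.rpow_const (p := 1 - s) (Or.inl hu.ne')
    have h3 := (hasDerivAt_id x).mul h2
    refine h3.congr_deriv ?_
    have e1 : (1 + b ^ 2 * x ^ 2) ^ (1 - s) = (1 + b ^ 2 * x ^ 2) * (1 + b ^ 2 * x ^ 2) ^ (-s) := by
      rw [show (1 - s) = 1 + (-s) by ring, Real.rpow_add hu, Real.rpow_one]
    have e2 : (1 + b ^ 2 * x ^ 2) ^ (1 - s - 1) = (1 + b ^ 2 * x ^ 2) ^ (-s) := by
      congr 1; ring
    rw [e1, e2]
    simp only [id_eq]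
    ring
  have htop := aux_tendsto_top hs hb
  have hbot : Tendsto (fun x : ℝ => x * (1 + b ^ 2 * x ^ 2) ^ (1 - s)) atBot (𝓝 0) := by
    have := (htop.comp tendsto_neg_atBot_atTop).neg
    rw [neg_zero] at this
    refine this.congr fun x => ?_
    simp [neg_mul]
  have h0 := integral_of_hasDerivAt_of_tendsto hderiv (hi1.sub (hi2.const_mul _)) hbot htop
  rw [sub_self] at h0
  rw [integral_sub hi1 (hi2.const_mul _), integral_const_mul] at h0
  linarith

/-- The second independent-equals moment of the centered coupled Gaussian
(Student's t) density equals its squared scale: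
`(∫ x²·p(x)^((1+3κ)/(1+κ)) dx)/(∫ p(x)^((1+3κ)/(1+κ)) dx) = σ²`, where
`p(x) = (1/Z)·(1 + κ·(x/σ)²)^(−(1+κ)/(2κ))` and
`Z = σ·√(π/κ)·Γ(1/(2κ))/Γ((1+κ)/(2κ))`. -/
theorem stmt_7 (σ κ : ℝ) (hσ : 0 < σ) (hκ : 0 < κ) :
    (∫ x : ℝ,
        x ^ 2 *
          ((1 / (σ * Real.sqrt (π / κ) * Real.Gamma (1 / (2 * κ)) /
              Real.Gamma ((1 + κ) / (2 * κ)))) *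
            (1 + κ * (x / σ) ^ 2) ^ (-(1 + κ) / (2 * κ))) ^ ((1 + 3 * κ) / (1 + κ))) /
      (∫ x : ℝ,
        ((1 / (σ * Real.sqrt (π / κ) * Real.Gamma (1 / (2 * κ)) /
            Real.Gamma ((1 + κ) / (2 * κ)))) *
          (1 + κ * (x / σ) ^ 2) ^ (-(1 + κ) / (2 * κ))) ^ ((1 + 3 * κ) / (1 + κ)))
      = σ ^ 2 := by
  have hκ1 : (0:ℝ) < 1 + κ := by linarith
  set c : ℝ := 1 / (σ * Real.sqrt (π / κ) * Real.Gamma (1 / (2 * κ)) /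
      Real.Gamma ((1 + κ) / (2 * κ))) with hc_def
  have hc : 0 < c := by
    have h1 : 0 < Real.sqrt (π / κ) := Real.sqrt_pos.2 (by positivity)
    have h2 : 0 < Real.Gamma (1 / (2 * κ)) := Real.Gamma_pos_of_pos (by positivity)
    have h3 : 0 < Real.Gamma ((1 + κ) / (2 * κ)) := Real.Gamma_pos_of_pos (by positivity)
    rw [hc_def]
    positivity
  set b : ℝ := Real.sqrt κ / σ with hb_def
  have hb : 0 < b := by
    rw [hb_def]
    positivity
  set s : ℝ := (1 + 3 * κ) / (2 * κ) with hs_def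
  have h2s : 2 * s = 3 + 1 / κ := by
    rw [hs_def]
    field_simp
    ring
  have hs : 3 < 2 * s := by
    have : 0 < 1 / κ := by positivity
    linarith
  have hbsq : b ^ 2 = κ / σ ^ 2 := by
    rw [hb_def, div_pow, Real.sq_sqrt hκ.le]
  have heq : ∀ x : ℝ,
      (c * (1 + κ * (x / σ) ^ 2) ^ (-(1 + κ) / (2 * κ))) ^ ((1 + 3 * κ) / (1 + κ)) =
        c ^ ((1 + 3 * κ) / (1 + κ)) * (1 + b ^ 2 * x ^ 2) ^ (-s) := by
    intro x
    have hxx : κ * (x / σ) ^ 2 = b ^ 2 * x ^ 2 := by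
      rw [hbsq, div_pow]
      field_simp
    rw [hxx]
    have hu : (0:ℝ) < 1 + b ^ 2 * x ^ 2 := by positivity
    have hκ' : κ ≠ 0 := hκ.ne'
    have hκ1' : (1 + κ) ≠ 0 := hκ1.ne'
    rw [Real.mul_rpow hc.le (Real.rpow_nonneg hu.le _), ← Real.rpow_mul hu.le,
      show -(1 + κ) / (2 * κ) * ((1 + 3 * κ) / (1 + κ)) = -s by
        rw [hs_def]; field_simp]
  simp only [heq]
  have e1 : ∀ x : ℝ, x ^ 2 * (c ^ ((1 + 3 * κ) / (1 + κ)) * (1 + b ^ 2 * x ^ 2) ^ (-s)) =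
      c ^ ((1 + 3 * κ) / (1 + κ)) * (x ^ 2 * (1 + b ^ 2 * x ^ 2) ^ (-s)) := fun x => by ring
  simp only [e1]
  rw [integral_const_mul, integral_const_mul,
    mul_div_mul_left _ _ (ne_of_gt (Real.rpow_pos_of_pos hc _))]
  have hkey := aux_key hs hb
  have hcoef : (2 * s - 3) * b ^ 2 = 1 / σ ^ 2 := by
    rw [hbsq, h2s]
    field_simp
    ring
  rw [hcoef] at hkey
  have hD : 0 < ∫ x : ℝ, (1 + b ^ 2 * x ^ 2) ^ (-s) := by
    refine (integral_pos_iff_support_of_nonneg ?_ (aux_int1 (by linarith) hb.ne')).2 ?_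
    · intro x
      exact Real.rpow_nonneg (by positivity) _
    · have hsup : Function.support (fun x : ℝ => (1 + b ^ 2 * x ^ 2) ^ (-s)) = Set.univ := by
        ext x
        simp only [Function.mem_support, Set.mem_univ, iff_true]
        exact (Real.rpow_pos_of_pos (by positivity) _).ne'
      rw [hsup]
      simp
  have hND : (∫ x : ℝ, x ^ 2 * (1 + b ^ 2 * x ^ 2) ^ (-s)) =
      σ ^ 2 * ∫ x : ℝ, (1 + b ^ 2 * x ^ 2) ^ (-s) := by
    rw [← hkey, ← mul_assoc, mul_one_div, div_self (by positivity : σ ^ 2 ≠ 0), one_mul]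
  rw [hND, mul_div_assoc, div_self hD.ne', mul_one]
end

section
/- Let κ ≥ 0 (with κ > 0 for the closed form) and N ≥ 1. For every probability vector p = (p₁, …, p_N), the Type I coupled entropy satisfies H_κ(p) ≤ H_κ(u_N), where u_N is the uniform distribution on N states, and H_κ(u_N) = (1/κ)·(N^(κ/(1+κ)) − 1) = ln_κ(N^(1/(1+κ))). -/
open Real

/-- Maximality axiom for the Type I coupled entropy with `κ > 0`: for every
probability vector `p` on `N` states, `H_κ(p) ≤ H_κ(u_N)` where `u_N` is the
uniform distribution, and `H_κ(u_N) = (1/κ)·(N^(κ/(1+κ)) − 1) = ln_κ(N^(1/(1+κ)))`. -/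
theorem stmt_11 (κ : ℝ) (hκ : 0 < κ) (N : ℕ) (hN : 1 ≤ N)
    (p : Fin N → ℝ) (hp : ∀ i, 0 ≤ p i) (hsum : ∑ i, p i = 1) :
    (1 / κ) * (-1 + (∑ i, p i ^ (1 + κ / (1 + κ)))⁻¹)
        ≤ (1 / κ) * (-1 + (∑ _i : Fin N, ((N : ℝ)⁻¹) ^ (1 + κ / (1 + κ)))⁻¹)
    ∧ (1 / κ) * (-1 + (∑ _i : Fin N, ((N : ℝ)⁻¹) ^ (1 + κ / (1 + κ)))⁻¹)
        = (1 / κ) * ((N : ℝ) ^ (κ / (1 + κ)) - 1)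
    ∧ (1 / κ) * ((N : ℝ) ^ (κ / (1 + κ)) - 1)
        = (((N : ℝ) ^ ((1 : ℝ) / (1 + κ))) ^ κ - 1) / κ := by
  have hNpos : (0 : ℝ) < N := by exact_mod_cast Nat.lt_of_lt_of_le Nat.zero_lt_one hN
  set r : ℝ := 1 + κ / (1 + κ) with hr
  have h1κ : (0 : ℝ) < 1 + κ := by linarith
  have hr1 : 1 ≤ r := by
    have : 0 ≤ κ / (1 + κ) := div_nonneg hκ.le h1κ.le
    simp [hr]; linarith
  -- uniform sum
  have huni : (∑ _i : Fin N, ((N : ℝ)⁻¹) ^ r) = (N : ℝ) ^ (1 - r) := by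
    rw [Finset.sum_const, Finset.card_univ, Fintype.card_fin, nsmul_eq_mul,
      Real.inv_rpow hNpos.le, ← Real.rpow_neg hNpos.le,
      show (1:ℝ) - r = 1 + (-r) by ring, Real.rpow_add hNpos, Real.rpow_one]
  -- power mean inequality
  have key : (N : ℝ) ^ (1 - r) ≤ ∑ i, p i ^ r := by
    have h := Real.rpow_arith_mean_le_arith_mean_rpow Finset.univ
      (fun _ : Fin N => (N : ℝ)⁻¹) p (fun i _ => by positivity)
      (by simp [Finset.card_univ]; field_simp) (fun i _ => hp i) hr1
    have hs : (∑ i, (N : ℝ)⁻¹ * p i) = (N : ℝ)⁻¹ := by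
      rw [← Finset.mul_sum, hsum, mul_one]
    rw [hs] at h
    have hinv : ((N : ℝ)⁻¹) ^ r = (N : ℝ) ^ (-r) := by
      rw [← Real.rpow_neg_one (N : ℝ), ← Real.rpow_mul hNpos.le]; ring_nf
    rw [hinv] at h
    have h2 : (∑ i, (N : ℝ)⁻¹ * p i ^ r) = (N : ℝ)⁻¹ * ∑ i, p i ^ r := by
      rw [← Finset.mul_sum]
    rw [h2] at h
    have := mul_le_mul_of_nonneg_left h hNpos.le
    calc (N : ℝ) ^ (1 - r) = (N : ℝ) * (N : ℝ) ^ (-r) := by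
          rw [show (1:ℝ) - r = 1 + (-r) by ring, Real.rpow_add hNpos, Real.rpow_one]
      _ ≤ (N : ℝ) * ((N : ℝ)⁻¹ * ∑ i, p i ^ r) := this
      _ = ∑ i, p i ^ r := by field_simp
  have hpow_pos : (0 : ℝ) < (N : ℝ) ^ (1 - r) := Real.rpow_pos_of_pos hNpos _
  refine ⟨?_, ?_, ?_⟩
  · apply mul_le_mul_of_nonneg_left _ (by positivity : (0:ℝ) ≤ 1/κ)
    apply add_le_add_right
    rw [huni]
    exact inv_anti₀ hpow_pos key
  · rw [huni]
    have : ((N : ℝ) ^ (1 - r))⁻¹ = (N : ℝ) ^ (κ / (1 + κ)) := by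
      rw [← Real.rpow_neg hNpos.le]
      congr 1
      simp [hr]
    rw [this]; ring
  · have : ((N : ℝ) ^ ((1:ℝ)/(1+κ))) ^ κ = (N : ℝ) ^ (κ / (1 + κ)) := by
      rw [← Real.rpow_mul hNpos.le]
      congr 1; field_simp
    rw [this]; ring
end

section
/- Let ρ > 1 and set κ = 1/(ρ−1), and let N ≥ 1 be an integer such that W = N^ρ is a positive integer. Then the Type I coupled entropy of the uniform distribution on W states grows extensively (linearly) in N: H_κ(u_W) = (1/κ)·(W^(κ/(1+κ)) − 1) = (ρ − 1)·(N − 1). -/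
open Real

/-- Extensive growth of the Type I coupled entropy at the matched coupling: for
`ρ > 1`, `κ = 1/(ρ−1)`, and `W = N^ρ` equiprobable states, the coupled entropy of
the uniform distribution on `W` states, `(1/κ)·(W^(κ/(1+κ)) − 1)`, grows linearly
in `N`: it equals `(ρ − 1)·(N − 1)`. -/
theorem stmt_12 (ρ : ℝ) (hρ : 1 < ρ) (κ : ℝ) (hκ : κ = 1 / (ρ - 1))
    (N : ℕ) (hN : 1 ≤ N) (W : ℕ) (hW : 0 < W) (hWN : (W : ℝ) = (N : ℝ) ^ ρ) :
    (1 / κ) * ((W : ℝ) ^ (κ / (1 + κ)) - 1) = (ρ - 1) * ((N : ℝ) - 1) := by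
  have h1 : ρ - 1 > 0 := by linarith
  have hρ0 : ρ ≠ 0 := by linarith
  have hexp : κ / (1 + κ) = 1 / ρ := by
    rw [hκ]; field_simp; ring
  have hNnn : (0:ℝ) ≤ (N:ℝ) := Nat.cast_nonneg N
  have hpow : (W : ℝ) ^ ((1:ℝ) / ρ) = (N:ℝ) := by
    rw [hWN, ← Real.rpow_mul hNnn, mul_one_div, div_self hρ0, Real.rpow_one]
  have hκinv : 1 / κ = ρ - 1 := by
    rw [hκ]; field_simp
  rw [hexp, hpow, hκinv]
end

section
/- Let p = (p₁, …, p_N) be a probability vector with all p_i > 0. Then the Type I coupled entropy converges to the Shannon entropy as the coupling vanishes: lim_{κ → 0⁺} (1/κ)·(−1 + (Σ_i p_i^(1+κ/(1+κ)))^(−1)) = −Σ_i p_i·ln p_i. -/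
open Real Filter

/-- The Type I coupled entropy converges to the Shannon entropy as the coupling
vanishes: `lim_{κ→0⁺} (1/κ)·(−1 + (Σ_i p_i^(1+κ/(1+κ)))⁻¹) = −Σ_i p_i·ln p_i`. -/
theorem stmt_13 (N : ℕ) (p : Fin N → ℝ)
    (hp : ∀ i, 0 < p i) (hsum : ∑ i, p i = 1) :
    Filter.Tendsto
      (fun κ : ℝ => (1 / κ) * (-1 + (∑ i, p i ^ (1 + κ / (1 + κ)))⁻¹))
      (nhdsWithin 0 (Set.Ioi 0))
      (nhds (-∑ i, p i * Real.log (p i))) := by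
  set f : ℝ → ℝ := fun κ => (∑ i, p i ^ (1 + κ / (1 + κ)))⁻¹ with hf
  have he : HasDerivAt (fun κ : ℝ => 1 + κ / (1 + κ)) 1 0 := by
    have h1 : HasDerivAt (fun κ : ℝ => κ / (1 + κ)) 1 0 := by
      have := (hasDerivAt_id (0:ℝ)).fun_div ((hasDerivAt_const (0:ℝ) 1).add (hasDerivAt_id 0))
        (by norm_num)
      simpa using this
    simpa using h1.const_add 1
  have hg : HasDerivAt (fun κ : ℝ => ∑ i, p i ^ (1 + κ / (1 + κ)))
      (∑ i, p i * Real.log (p i)) 0 := by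
    have := HasDerivAt.fun_sum (u := Finset.univ)
      (A := fun i (κ : ℝ) => p i ^ (1 + κ / (1 + κ)))
      (A' := fun i => p i * Real.log (p i)) (fun i _ => by
        have hb := ((hasStrictDerivAt_const_rpow (hp i) (1 + 0 / (1 + 0))).hasDerivAt).comp 0 he
        have : p i ^ (1 + (0:ℝ) / (1 + 0)) = p i := by
          norm_num
        simpa [this, mul_comm, Function.comp_def] using hb)
    simpa using this
  have hval : (∑ i, p i ^ (1 + (0:ℝ) / (1 + 0))) = 1 := by
    simp only [zero_div, add_zero]
    norm_num
    simpa using hsum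
  have hF : HasDerivAt f (-∑ i, p i * Real.log (p i)) 0 := by
    have := hg.inv (by rw [hval]; norm_num)
    simpa [hval, hsum, Pi.inv_def] using this
  have hslope := hasDerivAt_iff_tendsto_slope.mp hF
  have hmono : nhdsWithin (0:ℝ) (Set.Ioi 0) ≤ nhdsWithin 0 {(0:ℝ)}ᶜ :=
    nhdsWithin_mono 0 (fun x hx => ne_of_gt hx)
  have := hslope.comp (tendsto_id.mono_left hmono)
  refine this.congr' ?_
  filter_upwards [self_mem_nhdsWithin] with κ (hκ : κ ∈ Set.Ioi 0)
  have hf0 : f 0 = 1 := by rw [hf]; simp only; rw [hval]; norm_num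
  simp only [Function.comp, slope_def_field, id]
  rw [hf0]
  field_simp
  ring
end

section
/- For every σ > 0 and κ > 0, the continuous Type I coupled entropy of the coupled exponential density equals one plus the coupled logarithm of the scale with deformation κ/(1+κ): ∫₀^∞ (p(x)^q / ∫₀^∞ p(y)^q dy) · ln_κ(p(x)^(−1/(1+κ))) dx = 1 + ln_{κ/(1+κ)}(σ) = 1 + ((1+κ)/κ)·(σ^(κ/(1+κ)) − 1), where p(x) = (1/σ)·(1 + κ·x/σ)^(−(1+κ)/κ) and q = (1+2κ)/(1+κ). -/
open Real MeasureTheory Set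
lemma Jval {r : ℝ} (hr : 1 < r) :
    ∫ x in Ioi (0:ℝ), (1 + x) ^ (-r) = 1 / (r - 1) := by
  have h := (measurePreserving_add_right (volume : Measure ℝ) 1).setIntegral_preimage_emb
    (measurableEmbedding_addRight 1) (fun y => y ^ (-r)) (Ioi 1)
  have h2 : ∫ x in Ioi (0:ℝ), (x + 1) ^ (-r) = ∫ y in Ioi (1:ℝ), y ^ (-r) := by simpa using h
  have h3 : ∫ y in Ioi (1:ℝ), y ^ (-r) = 1 / (r - 1) := by
    rw [integral_Ioi_rpow_of_lt (by linarith) one_pos, one_rpow]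
    rw [show -r + 1 = -(r - 1) by ring, div_neg, neg_div, neg_neg]
  calc ∫ x in Ioi (0:ℝ), (1 + x) ^ (-r) = ∫ x in Ioi (0:ℝ), (x + 1) ^ (-r) := by
        simp_rw [add_comm]
    _ = 1 / (r - 1) := by rw [h2, h3]

lemma Jint {r : ℝ} (hr : 1 < r) :
    IntegrableOn (fun x => (1 + x) ^ (-r)) (Ioi (0:ℝ)) := by
  have h := ((measurePreserving_add_right (volume : Measure ℝ) 1).integrableOn_comp_preimage
    (measurableEmbedding_addRight 1) (f := fun y => y ^ (-r)) (s := Ioi 1)).mpr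
    (integrableOn_Ioi_rpow_of_lt (by linarith) one_pos)
  have hs : (· + (1:ℝ)) ⁻¹' Ioi 1 = Ioi 0 := by ext x; simp
  rw [hs] at h
  have : (fun x => (1 + x) ^ (-r)) = fun x : ℝ => (x + 1) ^ (-r) := by
    funext x; rw [add_comm]
  rw [this]
  exact h

lemma Ival (σ κ : ℝ) (hσ : 0 < σ) (hκ : 0 < κ) {r : ℝ} (hr : 1 < r) :
    ∫ x in Ioi (0:ℝ), (1 + κ * x / σ) ^ (-r) = σ / (κ * (r - 1)) := by
  have hb : 0 < κ / σ := div_pos hκ hσ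
  have h := integral_comp_mul_left_Ioi (fun y => (1 + y) ^ (-r)) 0 hb
  simp only [mul_zero] at h
  have heq : ∀ x : ℝ, (1 + κ * x / σ) ^ (-r) = (1 + (κ/σ) * x) ^ (-r) := by
    intro x; rw [mul_comm_div, mul_div_assoc]
  simp_rw [heq]
  rw [h, Jval hr, smul_eq_mul, inv_div]
  have h1 : r - 1 ≠ 0 := by linarith
  field_simp

lemma Iint (σ κ : ℝ) (hσ : 0 < σ) (hκ : 0 < κ) {r : ℝ} (hr : 1 < r) :
    IntegrableOn (fun x => (1 + κ * x / σ) ^ (-r)) (Ioi (0:ℝ)) := by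
  have hb : 0 < κ / σ := div_pos hκ hσ
  have h := (integrableOn_Ioi_comp_mul_left_iff (fun y => (1 + y) ^ (-r)) 0 hb).mpr
    (by rw [mul_zero]; exact Jint hr)
  have heq : (fun x : ℝ => (1 + κ/σ * x) ^ (-r)) = fun x => (1 + κ * x / σ) ^ (-r) := by
    funext x; rw [mul_comm_div, mul_div_assoc]
  rwa [heq] at h

lemma key_pow (σ : ℝ) (hσ : 0 < σ) {t : ℝ} (ht : 0 < t) (e s : ℝ) :
    ((1/σ) * t ^ e) ^ s = σ ^ (-s) * t ^ (e * s) := by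
  rw [mul_rpow (by positivity) (by positivity), div_rpow zero_le_one hσ.le, one_rpow,
    one_div, ← rpow_neg hσ.le, ← rpow_mul ht.le]

/-- The continuous Type I coupled entropy of the coupled exponential density equals
one plus the coupled logarithm of the scale with deformation `κ/(1+κ)`:
`∫₀^∞ (p(x)^q/∫₀^∞ p(y)^q dy)·ln_κ(p(x)^(−1/(1+κ))) dx = 1 + ((1+κ)/κ)·(σ^(κ/(1+κ)) − 1)`,
where `p(x) = (1/σ)·(1 + κ·x/σ)^(−(1+κ)/κ)`, `q = (1+2κ)/(1+κ)`, and
`ln_κ(x) = (x^κ − 1)/κ`. -/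
theorem stmt_14 (σ κ : ℝ) (hσ : 0 < σ) (hκ : 0 < κ) :
    (∫ x in Set.Ioi (0 : ℝ),
        (((1 / σ) * (1 + κ * x / σ) ^ (-(1 + κ) / κ)) ^ ((1 + 2 * κ) / (1 + κ)) /
            ∫ y in Set.Ioi (0 : ℝ),
              ((1 / σ) * (1 + κ * y / σ) ^ (-(1 + κ) / κ)) ^ ((1 + 2 * κ) / (1 + κ))) *
          (((((1 / σ) * (1 + κ * x / σ) ^ (-(1 + κ) / κ)) ^ (-(1 / (1 + κ)))) ^ κ - 1) / κ))
      = 1 + ((1 + κ) / κ) * (σ ^ (κ / (1 + κ)) - 1) := by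
  have hκ' : κ ≠ 0 := hκ.ne'
  have h1κ : (0:ℝ) < 1 + κ := by linarith
  have h1κ' : (1:ℝ) + κ ≠ 0 := h1κ.ne'
  have hrq1 : 1 < (1 + 2*κ)/κ := by rw [lt_div_iff₀ hκ]; linarith
  have hr11 : 1 < (1 + κ)/κ := by rw [lt_div_iff₀ hκ]; linarith
  have ht : ∀ x ∈ Ioi (0:ℝ), 0 < 1 + κ * x / σ := by
    intro x hx
    have hx' : 0 < x := hx
    have : 0 < κ * x / σ := div_pos (mul_pos hκ hx') hσ
    linarith
  -- the denominator
  have hD : (∫ y in Set.Ioi (0:ℝ),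
        ((1/σ) * (1 + κ * y / σ) ^ (-(1 + κ)/κ)) ^ ((1 + 2*κ)/(1 + κ)))
      = σ ^ (-((1 + 2*κ)/(1 + κ))) * (σ/(1 + κ)) := by
    rw [setIntegral_congr_fun measurableSet_Ioi
      (g := fun y : ℝ => σ ^ (-((1 + 2*κ)/(1 + κ))) * (1 + κ * y / σ) ^ (-((1 + 2*κ)/κ)))
      (fun y hy => by
        rw [key_pow σ hσ (ht y hy),
          show -(1 + κ)/κ * ((1 + 2*κ)/(1 + κ)) = -((1 + 2*κ)/κ) by field_simp])]
    rw [MeasureTheory.integral_const_mul, Ival σ κ hσ hκ hrq1,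
      show κ * ((1 + 2*κ)/κ - 1) = 1 + κ by field_simp; ring]
  rw [hD]
  -- the main integrand simplification
  set S := σ ^ (κ/(1 + κ)) with hS
  have hSpos : 0 < S := rpow_pos_of_pos hσ _
  set P := σ ^ (-((1 + 2*κ)/(1 + κ))) with hP
  have hPpos : 0 < P := rpow_pos_of_pos hσ _
  set c1 : ℝ := (1 + κ) * S / (σ * κ) with hc1
  set c2 : ℝ := (1 + κ) / (σ * κ) with hc2
  rw [setIntegral_congr_fun measurableSet_Ioi
    (g := fun x : ℝ => c1 * (1 + κ * x / σ) ^ (-((1 + κ)/κ))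
      - c2 * (1 + κ * x / σ) ^ (-((1 + 2*κ)/κ)))
    (fun x hx => by
      have htx := ht x hx
      rw [key_pow σ hσ htx, key_pow σ hσ htx, mul_rpow (by positivity) (by positivity),
        ← rpow_mul hσ.le, ← rpow_mul htx.le]
      have e1 : -(1 + κ)/κ * ((1 + 2*κ)/(1 + κ)) = -((1 + 2*κ)/κ) := by
        field_simp
      have e2 : -(-(1/(1 + κ))) * κ = κ/(1 + κ) := by field_simp
      have e3 : -(1 + κ)/κ * -(1/(1 + κ)) * κ = 1 := by field_simp
      have e4 : -((1 + κ)/κ) = -((1 + 2*κ)/κ) + 1 := by field_simp; ring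
      rw [e1, e2, e3, e4, rpow_one, ← hS, ← hP]
      dsimp only
      rw [rpow_add_one (ne_of_gt htx), hc1, hc2]
      field_simp)]
  rw [integral_sub ((Iint σ κ hσ hκ hr11).const_mul c1) ((Iint σ κ hσ hκ hrq1).const_mul c2),
    MeasureTheory.integral_const_mul, MeasureTheory.integral_const_mul,
    Ival σ κ hσ hκ hr11, Ival σ κ hσ hκ hrq1, hc1, hc2]
  have e5 : (1 + κ)/κ - 1 = 1/κ := by field_simp; ring
  have e6 : (1 + 2*κ)/κ - 1 = (1 + κ)/κ := by field_simp; ring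
  rw [e5, e6]
  field_simp
  ring
end

section
/- For every σ > 0 and κ > 0, the continuous Tsallis entropy with index q = (1+2κ)/(1+κ) of the coupled exponential density equals S^T = (1/(q−1))·(1 − ∫₀^∞ p(x)^q dx) = 1 − (1/(1+κ))·ln_{κ/(1+κ)}(σ^(−1)) = 1 + 1/κ − σ^(−κ/(1+κ))/κ, where p(x) = (1/σ)·(1 + κ·x/σ)^(−(1+κ)/κ). -/
open Real MeasureTheory

lemma shift_Ioi (f : ℝ → ℝ) (a : ℝ) :
    ∫ x in Set.Ioi (0 : ℝ), f (x + a) = ∫ x in Set.Ioi a, f x := by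
  rw [← integral_indicator measurableSet_Ioi, ← integral_indicator measurableSet_Ioi,
    ← integral_add_right_eq_self (fun x => (Set.Ioi a).indicator f x) a]
  congr 1
  ext x
  simp only [Set.indicator_apply, Set.mem_Ioi, lt_add_iff_pos_left]

/-- The continuous Tsallis entropy with index `q = (1+2κ)/(1+κ)` of the coupled
exponential density `p(x) = (1/σ)·(1 + κ·x/σ)^(−(1+κ)/κ)` equals
`(1/(q−1))·(1 − ∫₀^∞ p(x)^q dx) = 1 − (1/(1+κ))·ln_{κ/(1+κ)}(σ⁻¹)
 = 1 + 1/κ − σ^(−κ/(1+κ))/κ`, where `ln_κ(x) = (x^κ − 1)/κ`. -/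
theorem stmt_15 (σ κ : ℝ) (hσ : 0 < σ) (hκ : 0 < κ) :
    (1 / ((1 + 2 * κ) / (1 + κ) - 1)) *
        (1 - ∫ x in Set.Ioi (0 : ℝ),
          ((1 / σ) * (1 + κ * x / σ) ^ (-(1 + κ) / κ)) ^ ((1 + 2 * κ) / (1 + κ)))
      = 1 - (1 / (1 + κ)) *
          (((σ⁻¹) ^ (κ / (1 + κ)) - 1) / (κ / (1 + κ)))
    ∧ (1 / ((1 + 2 * κ) / (1 + κ) - 1)) *
        (1 - ∫ x in Set.Ioi (0 : ℝ),
          ((1 / σ) * (1 + κ * x / σ) ^ (-(1 + κ) / κ)) ^ ((1 + 2 * κ) / (1 + κ)))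
      = 1 + 1 / κ - σ ^ (-κ / (1 + κ)) / κ := by
  have h1k : (0:ℝ) < 1 + κ := by linarith
  have hκ0 : κ ≠ 0 := ne_of_gt hκ
  have h1k0 : (1:ℝ) + κ ≠ 0 := ne_of_gt h1k
  set q : ℝ := (1 + 2 * κ) / (1 + κ) with hqdef
  set r : ℝ := -(1 + 2 * κ) / κ with hrdef
  have hr1 : r < -1 := by
    rw [hrdef, neg_div, neg_lt_neg_iff, lt_div_iff₀ hκ]
    linarith
  have hsk : (0:ℝ) < σ / κ := div_pos hσ hκ
  -- pointwise identity of the integrand on Ioi 0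
  have hpt : ∀ x ∈ Set.Ioi (0:ℝ),
      ((1 / σ) * (1 + κ * x / σ) ^ (-(1 + κ) / κ)) ^ q
        = ((1/σ) ^ q * (κ/σ) ^ r) * (x + σ/κ) ^ r := by
    intro x hx
    have hx0 : (0:ℝ) < x := hx
    have hb : (0:ℝ) < 1 + κ * x / σ := by positivity
    have hpq : -(1 + κ) / κ * q = r := by
      rw [hqdef, hrdef]; field_simp
    have hB : 1 + κ * x / σ = (x + σ/κ) * (κ/σ) := by
      field_simp; ring
    rw [Real.mul_rpow (by positivity) (Real.rpow_nonneg hb.le _),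
      ← Real.rpow_mul hb.le, hpq, hB,
      Real.mul_rpow (by positivity) (by positivity)]
    ring
  -- the value of the integral
  have hI : (∫ x in Set.Ioi (0:ℝ),
      ((1 / σ) * (1 + κ * x / σ) ^ (-(1 + κ) / κ)) ^ q)
      = σ ^ (-(κ/(1+κ))) / (1 + κ) := by
    rw [setIntegral_congr_fun measurableSet_Ioi hpt]
    have : (∫ x in Set.Ioi (0:ℝ), ((1/σ) ^ q * (κ/σ) ^ r) * (x + σ/κ) ^ r)
        = ((1/σ) ^ q * (κ/σ) ^ r) * ∫ x in Set.Ioi (0:ℝ), (x + σ/κ) ^ r :=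
      integral_const_mul _ _
    rw [this, shift_Ioi (fun x => x ^ r) (σ/κ),
      integral_Ioi_rpow_of_lt hr1 hsk]
    -- now pure algebra with rpow
    have hks : (κ/σ) ^ r = ((σ/κ) ^ r)⁻¹ := by
      rw [show κ/σ = (σ/κ)⁻¹ by rw [inv_div], Real.inv_rpow hsk.le]
    have hr10 : r + 1 ≠ 0 := by
      intro h; rw [add_eq_zero_iff_eq_neg] at h; linarith [hr1, h]
    have hcomb : ((σ/κ) ^ r)⁻¹ * (σ/κ) ^ (r+1) = σ/κ := by
      rw [← Real.rpow_neg hsk.le, ← Real.rpow_add hsk]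
      simp
    have h1σ : (1/σ) ^ q = σ ^ (-q) := by
      rw [one_div, Real.inv_rpow hσ.le, ← Real.rpow_neg hσ.le]
    have hσq : σ ^ (-q) * σ = σ ^ (-(κ/(1+κ))) := by
      nth_rewrite 2 [show σ = σ ^ (1:ℝ) by rw [Real.rpow_one]]
      rw [← Real.rpow_add hσ]
      congr 1
      rw [hqdef]; field_simp; ring
    have hr1' : r + 1 = -((1+κ)/κ) := by rw [hrdef]; field_simp; ring
    calc (1/σ) ^ q * (κ/σ) ^ r * (-(σ/κ) ^ (r+1) / (r+1))
        = σ ^ (-q) * (((σ/κ) ^ r)⁻¹ * (σ/κ) ^ (r+1)) * (-1 / (r+1)) := by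
          rw [h1σ, hks]; ring
      _ = σ ^ (-q) * (σ/κ) * (κ/(1+κ)) := by
          rw [hcomb, hr1']
          congr 1
          rw [neg_div_neg_eq, one_div_div]
      _ = σ ^ (-(κ/(1+κ))) / (1 + κ) := by
          rw [← hσq]; field_simp
  rw [hI]
  have hq1 : q - 1 = κ/(1+κ) := by rw [hqdef]; field_simp; ring
  have hinv : (σ⁻¹) ^ (κ/(1+κ)) = σ ^ (-(κ/(1+κ))) := by
    rw [Real.inv_rpow hσ.le, ← Real.rpow_neg hσ.le]
  have hnd : σ ^ (-κ / (1+κ)) = σ ^ (-(κ/(1+κ))) := by rw [neg_div]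
  rw [hq1, hinv, hnd]
  set A : ℝ := σ ^ (-(κ/(1+κ)))
  constructor
  · field_simp
    ring
  · field_simp
    ring
end

section
/- For every σ > 0 and κ > 0, the continuous normalized Tsallis entropy with index q = (1+2κ)/(1+κ) of the coupled exponential density equals S^NT = (1/(q−1))·((∫₀^∞ p(x)^q dx)^(−1) − 1) = 1 + κ + (1+κ)·ln_{κ/(1+κ)}(σ), where p(x) = (1/σ)·(1 + κ·x/σ)^(−(1+κ)/κ). -/
open Real MeasureTheory Filter Set Topology

theorem aux_key_s16 (σ κ : ℝ) (hσ : 0 < σ) (hκ : 0 < κ) :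
    ∫ x in Set.Ioi (0 : ℝ), (1 + κ * x / σ) ^ (-(1 + κ) / κ - 1) = σ / (1 + κ) := by
  have hκ1 : (0 : ℝ) < 1 + κ := by linarith
  set p : ℝ := -(1 + κ) / κ with hp
  have hpneg : p < 0 := by
    rw [hp]; exact div_neg_of_neg_of_pos (by linarith) hκ
  have hbase : ∀ x : ℝ, 0 ≤ x → 0 < 1 + κ * x / σ := fun x hx => by positivity
  have hderiv : ∀ x ∈ Ici (0 : ℝ),
      HasDerivAt (fun y => -(σ / (1 + κ)) * (1 + κ * y / σ) ^ p)
        ((1 + κ * x / σ) ^ (p - 1)) x := by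
    intro x hx
    have hinner : HasDerivAt (fun y : ℝ => 1 + κ * y / σ) (κ / σ) x := by
      simpa using (((hasDerivAt_id x).const_mul κ).div_const σ).const_add 1
    have h2 := (hinner.rpow_const (p := p) (Or.inl (ne_of_gt (hbase x hx)))).const_mul
      (-(σ / (1 + κ)))
    refine h2.congr_deriv ?_
    rw [hp]
    field_simp
  have htend : Tendsto (fun y => -(σ / (1 + κ)) * (1 + κ * y / σ) ^ p) atTop (𝓝 0) := by
    have hb : Tendsto (fun y : ℝ => 1 + κ * y / σ) atTop atTop := by
      apply tendsto_atTop_add_const_left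
      exact (Tendsto.const_mul_atTop hκ tendsto_id).atTop_div_const hσ
    have h0 : Tendsto (fun y : ℝ => (1 + κ * y / σ) ^ p) atTop (𝓝 0) := by
      have := (tendsto_rpow_neg_atTop (y := -p) (by linarith)).comp hb
      simpa [neg_neg, Function.comp_def] using this
    have := h0.const_mul (-(σ / (1 + κ)))
    simpa using this
  have hnn : ∀ x ∈ Ioi (0 : ℝ), 0 ≤ (1 + κ * x / σ) ^ (p - 1) := fun x hx =>
    rpow_nonneg (le_of_lt (hbase x (le_of_lt hx))) _
  have := integral_Ioi_of_hasDerivAt_of_nonneg' hderiv hnn htend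
  rw [this]
  simp [Real.one_rpow]

/-- The continuous normalized Tsallis entropy with index `q = (1+2κ)/(1+κ)` of the
coupled exponential density `p(x) = (1/σ)·(1 + κ·x/σ)^(−(1+κ)/κ)` equals
`(1/(q−1))·((∫₀^∞ p(x)^q dx)⁻¹ − 1) = 1 + κ + (1+κ)·ln_{κ/(1+κ)}(σ)`,
where `ln_κ(x) = (x^κ − 1)/κ`. -/
theorem stmt_16 (σ κ : ℝ) (hσ : 0 < σ) (hκ : 0 < κ) :
    (1 / ((1 + 2 * κ) / (1 + κ) - 1)) *
        ((∫ x in Set.Ioi (0 : ℝ),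
            ((1 / σ) * (1 + κ * x / σ) ^ (-(1 + κ) / κ)) ^ ((1 + 2 * κ) / (1 + κ)))⁻¹ - 1)
      = 1 + κ + (1 + κ) * ((σ ^ (κ / (1 + κ)) - 1) / (κ / (1 + κ))) := by
  have hκ1 : (0 : ℝ) < 1 + κ := by linarith
  set q : ℝ := (1 + 2 * κ) / (1 + κ) with hq
  have hbase : ∀ x : ℝ, 0 ≤ x → 0 < 1 + κ * x / σ := fun x hx => by positivity
  have hcongr : ∀ x ∈ Ioi (0 : ℝ),
      ((1 / σ) * (1 + κ * x / σ) ^ (-(1 + κ) / κ)) ^ q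
        = σ ^ (-q) * (1 + κ * x / σ) ^ (-(1 + κ) / κ - 1) := by
    intro x hx
    have hB := hbase x (le_of_lt hx)
    rw [mul_rpow (by positivity) (rpow_nonneg hB.le _), one_div, inv_rpow hσ.le,
      ← rpow_neg hσ.le, ← rpow_mul hB.le]
    have he : (-(1 + κ) / κ) * q = -(1 + κ) / κ - 1 := by
      rw [hq]; field_simp; ring
    rw [he]
  have hint : (∫ x in Set.Ioi (0 : ℝ),
      ((1 / σ) * (1 + κ * x / σ) ^ (-(1 + κ) / κ)) ^ q)
      = σ ^ (-q) * (σ / (1 + κ)) := by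
    rw [setIntegral_congr_fun measurableSet_Ioi hcongr, integral_const_mul,
      aux_key_s16 σ κ hσ hκ]
  rw [hint]
  set t : ℝ := σ ^ (κ / (1 + κ)) with htdef
  have ht : 0 < t := rpow_pos_of_pos hσ _
  have hexp : -q + 1 = -(κ / (1 + κ)) := by rw [hq]; field_simp; ring
  have hts : σ ^ (-q) * (σ / (1 + κ)) = t⁻¹ / (1 + κ) := by
    rw [div_eq_mul_inv σ, ← mul_assoc, ← rpow_add_one hσ.ne' (-q), hexp,
      rpow_neg hσ.le, htdef]
    ring
  rw [hts]
  have hq1 : q - 1 = κ / (1 + κ) := by rw [hq]; field_simp; ring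
  rw [hq1]
  have h1 : (t⁻¹ / (1 + κ))⁻¹ = t * (1 + κ) := by
    rw [div_eq_mul_inv, mul_inv, inv_inv, inv_inv]
  rw [h1]
  field_simp
  ring
end

section
/- Fix σ > 0 and for each κ > 0 let H_κ = 1 + ((1+κ)/κ)·(σ^(κ/(1+κ)) − 1) be the coupled entropy, S^T_κ = 1 + 1/κ − σ^(−κ/(1+κ))/κ the Tsallis entropy, and S^NT_κ = (1+κ)·H_κ the normalized Tsallis entropy of the coupled exponential density with scale σ and coupling κ. Then as κ → ∞: H_κ → σ, S^T_κ → 1, and S^NT_κ → +∞. Hence only the coupled entropy converges to the scale as the coupling increases: the Tsallis entropy converges to a constant independent of σ and the normalized Tsallis entropy diverges. -/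
open Real Filter

lemma aux_inv : Tendsto (fun κ : ℝ => 1 / κ) atTop (nhds 0) := by
  simpa [one_div] using (tendsto_inv_atTop_zero : Tendsto (fun r : ℝ => r⁻¹) atTop (nhds 0))

lemma aux_exp : Tendsto (fun κ : ℝ => κ / (1 + κ)) atTop (nhds 1) := by
  have h0 : Tendsto (fun κ : ℝ => 1 / (1 + κ)) atTop (nhds 0) :=
    aux_inv.comp (tendsto_atTop_add_const_left atTop 1 tendsto_id)
  have h : Tendsto (fun κ : ℝ => 1 - 1 / (1 + κ)) atTop (nhds 1) := by
    simpa using (tendsto_const_nhds (x := (1:ℝ)) (f := atTop)).sub h0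
  refine h.congr' ?_
  filter_upwards [eventually_gt_atTop 0] with κ hκ
  have h1 : (1 : ℝ) + κ ≠ 0 := by linarith
  field_simp
  ring

lemma aux_ratio : Tendsto (fun κ : ℝ => (1 + κ) / κ) atTop (nhds 1) := by
  have h : Tendsto (fun κ : ℝ => 1 / κ + 1) atTop (nhds 1) := by
    simpa using aux_inv.add (tendsto_const_nhds (x := (1:ℝ)) (f := atTop))
  refine h.congr' ?_
  filter_upwards [eventually_gt_atTop 0] with κ hκ
  field_simp

lemma aux_rpow (σ : ℝ) (hσ : 0 < σ) :
    Tendsto (fun κ : ℝ => σ ^ (κ / (1 + κ))) atTop (nhds σ) := by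
  have := (Real.continuousAt_const_rpow (a := σ) (b := (1:ℝ)) hσ.ne').tendsto.comp aux_exp
  simpa [Function.comp_def] using this

lemma aux_H (σ : ℝ) (hσ : 0 < σ) :
    Tendsto (fun κ : ℝ => 1 + ((1 + κ) / κ) * (σ ^ (κ / (1 + κ)) - 1))
      atTop (nhds σ) := by
  have := (tendsto_const_nhds (x := (1:ℝ)) (f := atTop)).add
    (aux_ratio.mul ((aux_rpow σ hσ).sub (tendsto_const_nhds (x := (1:ℝ)))))
  simpa using this

/-- Asymptotics as the coupling `κ → ∞` for the coupled exponential density with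
scale `σ`: the coupled entropy `H_κ = 1 + ((1+κ)/κ)·(σ^(κ/(1+κ)) − 1)` converges
to the scale `σ`; the Tsallis entropy `S^T_κ = 1 + 1/κ − σ^(−κ/(1+κ))/κ` converges
to the constant `1` (independent of `σ`); and the normalized Tsallis entropy
`S^NT_κ = (1+κ)·H_κ` diverges to `+∞`. -/
theorem stmt_17 (σ : ℝ) (hσ : 0 < σ) :
    Filter.Tendsto (fun κ : ℝ => 1 + ((1 + κ) / κ) * (σ ^ (κ / (1 + κ)) - 1))
      Filter.atTop (nhds σ)
    ∧ Filter.Tendsto (fun κ : ℝ => 1 + 1 / κ - σ ^ (-κ / (1 + κ)) / κ)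
      Filter.atTop (nhds 1)
    ∧ Filter.Tendsto
        (fun κ : ℝ => (1 + κ) * (1 + ((1 + κ) / κ) * (σ ^ (κ / (1 + κ)) - 1)))
        Filter.atTop Filter.atTop := by
  refine ⟨aux_H σ hσ, ?_, ?_⟩
  · have hrp : Tendsto (fun κ : ℝ => σ ^ (-κ / (1 + κ))) atTop (nhds (σ ^ (-1 : ℝ))) := by
      have hneg : Tendsto (fun κ : ℝ => -κ / (1 + κ)) atTop (nhds (-1)) := by
        refine aux_exp.neg.congr fun κ => by ring
      have := (Real.continuousAt_const_rpow (a := σ) (b := (-1:ℝ)) hσ.ne').tendsto.comp hneg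
      simpa [Function.comp_def] using this
    have h2 : Tendsto (fun κ : ℝ => σ ^ (-κ / (1 + κ)) / κ) atTop (nhds 0) := by
      have := hrp.mul aux_inv
      simpa [div_eq_mul_inv, one_div] using this
    have := ((tendsto_const_nhds (x := (1:ℝ)) (f := atTop)).add aux_inv).sub h2
    simpa using this
  · exact Tendsto.atTop_mul_pos hσ (tendsto_atTop_add_const_left atTop 1 tendsto_id) (aux_H σ hσ)
end

section
/- Let κ > 0, σ > 0, and q = (1+2κ)/(1+κ). Among all measurable probability densities p on [0, ∞) satisfying ∫₀^∞ p(x) dx = 1, 0 < ∫₀^∞ p(x)^q dx < ∞, and the independent-equals mean constraint (∫₀^∞ x·p(x)^q dx)/(∫₀^∞ p(x)^q dx) = σ, the coupled entropy H_κ(p) = (1/κ)·(−1 + (∫₀^∞ p(x)^q dx)^(−1)) is maximized by the coupled exponential density p*(x) = (1/σ)·(1 + κ·x/σ)^(−(1+κ)/κ), for which H_κ(p*) = 1 + ln_{κ/(1+κ)}(σ). -/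
open Real MeasureTheory Set Filter Topology

lemma stmt18_hasDerivAt_base (κ σ : ℝ) (x : ℝ) :
    HasDerivAt (fun t : ℝ => 1 + κ * t / σ) (κ / σ) x := by
  simpa using (((hasDerivAt_id x).const_mul κ).div_const σ).const_add 1

lemma stmt18_intB (κ σ b : ℝ) (hκ : 0 < κ) (hσ : 0 < σ) (hb : b < -1) :
    IntegrableOn (fun x => (1 + κ * x / σ) ^ b) (Ioi (0:ℝ)) ∧
    ∫ x in Ioi (0:ℝ), (1 + κ * x / σ) ^ b = -σ / (κ * (b + 1)) := by
  have hb1 : b + 1 ≠ 0 := by intro h; rw [show b = -1 by linarith] at hb; norm_num at hb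
  have hpos : ∀ x : ℝ, 0 ≤ x → 0 < 1 + κ * x / σ := by
    intro x hx
    have : 0 ≤ κ * x / σ := by positivity
    linarith
  have hd : ∀ x ∈ Ici (0:ℝ), HasDerivAt
      (fun t => (1 + κ * t / σ) ^ (b+1) / (κ / σ * (b+1))) ((1 + κ * x / σ) ^ b) x := by
    intro x hx
    have h1 := (stmt18_hasDerivAt_base κ σ x).rpow_const (p := b+1) (Or.inl (hpos x hx).ne')
    have h2 := h1.div_const (κ / σ * (b+1))
    refine h2.congr_deriv ?_
    rw [add_sub_cancel_right, mul_div_cancel_left₀ _ (mul_ne_zero (div_ne_zero hκ.ne' hσ.ne') hb1)]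
  have htop : Tendsto (fun t : ℝ => (1 + κ * t / σ) ^ (b+1) / (κ / σ * (b+1)))
      atTop (𝓝 (0 / (κ / σ * (b+1)))) := by
    apply Tendsto.div_const
    have hB : Tendsto (fun t : ℝ => 1 + κ * t / σ) atTop atTop := by
      apply tendsto_atTop_add_const_left
      exact (tendsto_id.const_mul_atTop hκ).atTop_div_const hσ
    have := (tendsto_rpow_neg_atTop (y := -(b+1)) (by linarith)).comp hB
    simpa only [neg_neg, Function.comp_def] using this
  have hint : IntegrableOn (fun x => (1 + κ * x / σ) ^ b) (Ioi (0:ℝ)) :=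
    integrableOn_Ioi_deriv_of_nonneg' hd
      (fun x hx => rpow_nonneg (hpos x (le_of_lt hx)).le b) htop
  refine ⟨hint, ?_⟩
  rw [integral_Ioi_of_hasDerivAt_of_tendsto' hd hint htop]
  norm_num
  field_simp

lemma stmt18_intxB (κ σ b : ℝ) (hκ : 0 < κ) (hσ : 0 < σ) (hb : b + 1 < -1) :
    IntegrableOn (fun x => x * (1 + κ * x / σ) ^ b) (Ioi (0:ℝ)) ∧
    ∫ x in Ioi (0:ℝ), x * (1 + κ * x / σ) ^ b
      = σ / κ * (-σ / (κ * (b + 1 + 1)) - -σ / (κ * (b + 1))) := by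
  have hb' : b < -1 := by linarith
  obtain ⟨i1, v1⟩ := stmt18_intB κ σ (b+1) hκ hσ hb
  obtain ⟨i0, v0⟩ := stmt18_intB κ σ b hκ hσ hb'
  have heq : EqOn (fun x => σ / κ * ((1 + κ * x / σ) ^ (b+1) - (1 + κ * x / σ) ^ b))
      (fun x => x * (1 + κ * x / σ) ^ b) (Ioi (0:ℝ)) := by
    intro x hx
    have hx0 : (0:ℝ) < x := hx
    have hB : 0 < 1 + κ * x / σ := by
      have : 0 < κ * x / σ := by positivity
      linarith
    simp only
    rw [rpow_add_one hB.ne' b]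
    field_simp
    ring
  constructor
  · exact IntegrableOn.congr_fun ((i1.sub i0).const_mul (σ/κ)) heq measurableSet_Ioi
  · rw [← setIntegral_congr_fun measurableSet_Ioi heq, integral_const_mul,
      integral_sub i1 i0, v1, v0]

lemma stmt18_tangent {A b q : ℝ} (hA : 0 < A) (hb : 0 ≤ b) (hq : 1 ≤ q) :
    A ^ q + q * A ^ (q-1) * (b - A) ≤ b ^ q := by
  have hs : (-1:ℝ) ≤ b / A - 1 := by
    have : 0 ≤ b / A := by positivity
    linarith
  have h := one_add_mul_self_le_rpow_one_add hs hq
  rw [show 1 + (b / A - 1) = b / A by ring, div_rpow hb hA.le] at h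
  have hAq : 0 < A ^ q := rpow_pos_of_pos hA q
  have hA1 : A ^ (q-1) * A = A ^ q := by
    rw [← rpow_add_one hA.ne' (q-1)]; ring_nf
  have h2 := mul_le_mul_of_nonneg_right h hAq.le
  rw [div_mul_cancel₀ _ hAq.ne'] at h2
  have key : (1 + q * (b/A - 1)) * (A^(q-1) * A) = A^(q-1)*A + q * A^(q-1) * (b - A) := by
    field_simp
  rw [← hA1] at h2 ⊢
  rw [key] at h2
  exact h2

/-- Maximum coupled entropy principle: among all measurable probability densities
`p` on `[0,∞)` with `∫₀^∞ p = 1`, `0 < ∫₀^∞ p^q < ∞` (finiteness expressed as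
integrability), and independent-equals mean `(∫₀^∞ x·p^q)/(∫₀^∞ p^q) = σ`, the
coupled entropy `H_κ(p) = (1/κ)·(−1 + (∫₀^∞ p^q)⁻¹)` with `q = (1+2κ)/(1+κ)` is
maximized by the coupled exponential density
`p*(x) = (1/σ)·(1 + κ·x/σ)^(−(1+κ)/κ)`, for which
`H_κ(p*) = 1 + ln_{κ/(1+κ)}(σ) = 1 + ((1+κ)/κ)·(σ^(κ/(1+κ)) − 1)`. -/
theorem stmt_18 (κ σ : ℝ) (hκ : 0 < κ) (hσ : 0 < σ)
    (q : ℝ) (hq : q = (1 + 2 * κ) / (1 + κ)) :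
    (∀ p : ℝ → ℝ, Measurable p → (∀ x ∈ Set.Ioi (0 : ℝ), 0 ≤ p x) →
      (∫ x in Set.Ioi (0 : ℝ), p x) = 1 →
      IntegrableOn (fun x => p x ^ q) (Set.Ioi (0 : ℝ)) →
      0 < ∫ x in Set.Ioi (0 : ℝ), p x ^ q →
      (∫ x in Set.Ioi (0 : ℝ), x * p x ^ q) / (∫ x in Set.Ioi (0 : ℝ), p x ^ q) = σ →
      (1 / κ) * (-1 + (∫ x in Set.Ioi (0 : ℝ), p x ^ q)⁻¹)
        ≤ (1 / κ) * (-1 + (∫ x in Set.Ioi (0 : ℝ),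
            ((1 / σ) * (1 + κ * x / σ) ^ (-(1 + κ) / κ)) ^ q)⁻¹))
    ∧ (1 / κ) * (-1 + (∫ x in Set.Ioi (0 : ℝ),
          ((1 / σ) * (1 + κ * x / σ) ^ (-(1 + κ) / κ)) ^ q)⁻¹)
        = 1 + ((1 + κ) / κ) * (σ ^ (κ / (1 + κ)) - 1) := by
  have hκ1 : (0:ℝ) < 1 + κ := by linarith
  have hq1 : (1:ℝ) < q := by rw [hq, lt_div_iff₀ hκ1]; linarith
  set b0 : ℝ := -(1 + κ) / κ with hb0def
  set b1 : ℝ := -(1 + 2*κ) / κ with hb1def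
  have hb0 : b0 < -1 := by rw [hb0def, div_lt_iff₀ hκ]; linarith
  have hb1 : b1 < -1 := by rw [hb1def, div_lt_iff₀ hκ]; linarith
  have hb10 : b1 + 1 = b0 := by rw [hb0def, hb1def]; field_simp; ring
  have hb1' : b1 + 1 < -1 := by rw [hb10]; exact hb0
  have hb0q : b0 * q = b1 := by rw [hb0def, hb1def, hq]; field_simp
  have hqm1 : q - 1 = κ / (1+κ) := by rw [hq]; field_simp; ring
  have hb0q1 : b0 * (q - 1) = -1 := by rw [hqm1, hb0def]; field_simp
  have hB : ∀ x : ℝ, 0 ≤ x → 0 < 1 + κ * x / σ := by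
    intro x hx
    have : 0 ≤ κ * x / σ := by positivity
    linarith
  have hgq : ∀ x ∈ Ioi (0:ℝ), ((1/σ) * (1 + κ*x/σ) ^ b0) ^ q
      = (1/σ) ^ q * (1 + κ*x/σ) ^ b1 := by
    intro x hx
    rw [mul_rpow (by positivity) (rpow_nonneg (hB x (le_of_lt hx)).le b0),
      ← rpow_mul (hB x (le_of_lt hx)).le, hb0q]
  obtain ⟨iB1, vB1⟩ := stmt18_intB κ σ b1 hκ hσ hb1
  obtain ⟨iB0, vB0⟩ := stmt18_intB κ σ b0 hκ hσ hb0
  obtain ⟨ixB1, vxB1⟩ := stmt18_intxB κ σ b1 hκ hσ hb1'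
  have ig : IntegrableOn (fun x => (1/σ) * (1 + κ*x/σ) ^ b0) (Ioi (0:ℝ)) := iB0.const_mul _
  have e0 : κ * (b0 + 1) = -1 := by rw [hb0def]; field_simp; ring
  have e1 : κ * b0 = -(1+κ) := by rw [hb0def]; field_simp
  have vg : ∫ x in Ioi (0:ℝ), (1/σ) * (1 + κ*x/σ) ^ b0 = 1 := by
    rw [integral_const_mul, vB0, e0]
    field_simp
  have igq : IntegrableOn (fun x => ((1/σ) * (1 + κ*x/σ) ^ b0) ^ q) (Ioi (0:ℝ)) :=
    IntegrableOn.congr_fun (iB1.const_mul ((1/σ)^q))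
      (fun x hx => (hgq x hx).symm) measurableSet_Ioi
  have vgq : ∫ x in Ioi (0:ℝ), ((1/σ) * (1 + κ*x/σ) ^ b0) ^ q = (1/σ)^q * (σ/(1+κ)) := by
    rw [setIntegral_congr_fun measurableSet_Ioi hgq, integral_const_mul, vB1]
    congr 1
    rw [hb10, e1, neg_div_neg_eq]
  have ixgq : IntegrableOn (fun x => x * ((1/σ) * (1 + κ*x/σ) ^ b0) ^ q) (Ioi (0:ℝ)) := by
    refine IntegrableOn.congr_fun (ixB1.const_mul ((1/σ)^q)) ?_ measurableSet_Ioi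
    intro x hx
    simp only
    rw [hgq x hx]; ring
  have vxgq : ∫ x in Ioi (0:ℝ), x * ((1/σ) * (1 + κ*x/σ) ^ b0) ^ q
      = σ * ((1/σ)^q * (σ/(1+κ))) := by
    have heq : EqOn (fun x => (1/σ)^q * (x * (1 + κ*x/σ) ^ b1))
        (fun x => x * ((1/σ) * (1 + κ*x/σ) ^ b0) ^ q) (Ioi (0:ℝ)) := by
      intro x hx
      simp only
      rw [hgq x hx]; ring
    rw [← setIntegral_congr_fun measurableSet_Ioi heq, integral_const_mul, vxB1]
    have e2 : σ/κ * (-σ / (κ * (b1 + 1 + 1)) - -σ / (κ * (b1 + 1))) = σ * (σ/(1+κ)) := by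
      rw [hb10, e0, e1, neg_div_neg_eq, neg_div_neg_eq, div_one]
      field_simp
      ring
    rw [e2]; ring
  have hIgpos : 0 < (1/σ:ℝ)^q * (σ/(1+κ)) :=
    mul_pos (rpow_pos_of_pos (by positivity) q) (div_pos hσ hκ1)
  constructor
  · intro p hpm hpnn hp1 hpq hIp hmean
    set K : ℝ := q * (1/σ)^(q-1) / (1+κ) with hKdef
    have hIntp : IntegrableOn p (Ioi (0:ℝ)) := by
      by_contra h
      rw [integral_undef h] at hp1
      norm_num at hp1
    have hIntx : IntegrableOn (fun x => x * p x ^ q) (Ioi (0:ℝ)) := by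
      by_contra h
      rw [integral_undef h, zero_div] at hmean
      exact hσ.ne' hmean.symm
    have hmean' : ∫ x in Ioi (0:ℝ), x * p x ^ q = σ * ∫ x in Ioi (0:ℝ), p x ^ q := by
      rw [div_eq_iff hIp.ne'] at hmean
      exact hmean
    have hpt : ∀ x ∈ Ioi (0:ℝ),
        0 ≤ (1/(1+κ)) * (p x ^ q) + (κ/(σ*(1+κ))) * (x * p x ^ q)
          - ((1/(1+κ)) * (((1/σ) * (1 + κ*x/σ) ^ b0) ^ q)
              + (κ/(σ*(1+κ))) * (x * ((1/σ) * (1 + κ*x/σ) ^ b0) ^ q))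
          - (K * p x - K * ((1/σ) * (1 + κ*x/σ) ^ b0)) := by
      intro x hx
      have hx0 : (0:ℝ) < x := hx
      have hBx : 0 < 1 + κ*x/σ := hB x hx0.le
      have hA : 0 < (1/σ) * (1 + κ*x/σ) ^ b0 :=
        mul_pos (by positivity) (rpow_pos_of_pos hBx b0)
      have ht := stmt18_tangent hA (hpnn x hx) hq1.le
      have hw : (0:ℝ) < (1 + κ*x/σ)/(1+κ) := div_pos hBx hκ1
      have ht2 := mul_le_mul_of_nonneg_left ht hw.le
      have hA1 : ((1/σ) * (1 + κ*x/σ) ^ b0) ^ (q-1)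
          = (1/σ)^(q-1) * (1 + κ*x/σ)⁻¹ := by
        rw [mul_rpow (by positivity) (rpow_nonneg hBx.le b0),
          ← rpow_mul hBx.le, hb0q1, rpow_neg_one]
      have hKx : ((1 + κ*x/σ)/(1+κ)) * (q * ((1/σ) * (1 + κ*x/σ) ^ b0) ^ (q-1)) = K := by
        rw [hA1, hKdef]
        field_simp
      have expand : ((1 + κ*x/σ)/(1+κ)) * (((1/σ) * (1 + κ*x/σ) ^ b0) ^ q
            + q * ((1/σ) * (1 + κ*x/σ) ^ b0) ^ (q-1) * (p x - (1/σ) * (1 + κ*x/σ) ^ b0))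
          = ((1 + κ*x/σ)/(1+κ)) * (((1/σ) * (1 + κ*x/σ) ^ b0) ^ q)
            + K * (p x - (1/σ) * (1 + κ*x/σ) ^ b0) := by
        rw [← hKx]; ring
      rw [expand] at ht2
      have final : (1/(1+κ)) * (p x ^ q) + (κ/(σ*(1+κ))) * (x * p x ^ q)
          - ((1/(1+κ)) * (((1/σ) * (1 + κ*x/σ) ^ b0) ^ q)
              + (κ/(σ*(1+κ))) * (x * ((1/σ) * (1 + κ*x/σ) ^ b0) ^ q))
          - (K * p x - K * ((1/σ) * (1 + κ*x/σ) ^ b0))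
          = ((1 + κ*x/σ)/(1+κ)) * (p x ^ q)
            - (((1 + κ*x/σ)/(1+κ)) * (((1/σ) * (1 + κ*x/σ) ^ b0) ^ q)
              + K * (p x - (1/σ) * (1 + κ*x/σ) ^ b0)) := by
        field_simp
        ring
      rw [final]
      linarith
    have hnn : 0 ≤ ∫ x in Ioi (0:ℝ),
        ((1/(1+κ)) * (p x ^ q) + (κ/(σ*(1+κ))) * (x * p x ^ q)
          - ((1/(1+κ)) * (((1/σ) * (1 + κ*x/σ) ^ b0) ^ q)
              + (κ/(σ*(1+κ))) * (x * ((1/σ) * (1 + κ*x/σ) ^ b0) ^ q))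
          - (K * p x - K * ((1/σ) * (1 + κ*x/σ) ^ b0))) :=
      setIntegral_nonneg measurableSet_Ioi hpt
    have J1 : IntegrableOn (fun x => (1/(1+κ)) * (p x ^ q)) (Ioi (0:ℝ)) := hpq.const_mul _
    have J2 : IntegrableOn (fun x => (κ/(σ*(1+κ))) * (x * p x ^ q)) (Ioi (0:ℝ)) :=
      hIntx.const_mul _
    have J3 : IntegrableOn (fun x => (1/(1+κ)) * (((1/σ) * (1 + κ*x/σ) ^ b0) ^ q))
        (Ioi (0:ℝ)) := igq.const_mul _
    have J4 : IntegrableOn (fun x => (κ/(σ*(1+κ))) * (x * ((1/σ) * (1 + κ*x/σ) ^ b0) ^ q))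
        (Ioi (0:ℝ)) := ixgq.const_mul _
    have J5 : IntegrableOn (fun x => K * p x) (Ioi (0:ℝ)) := hIntp.const_mul _
    have J6 : IntegrableOn (fun x => K * ((1/σ) * (1 + κ*x/σ) ^ b0)) (Ioi (0:ℝ)) :=
      ig.const_mul _
    have hsum : ∫ x in Ioi (0:ℝ),
        ((1/(1+κ)) * (p x ^ q) + (κ/(σ*(1+κ))) * (x * p x ^ q)
          - ((1/(1+κ)) * (((1/σ) * (1 + κ*x/σ) ^ b0) ^ q)
              + (κ/(σ*(1+κ))) * (x * ((1/σ) * (1 + κ*x/σ) ^ b0) ^ q))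
          - (K * p x - K * ((1/σ) * (1 + κ*x/σ) ^ b0)))
        = (∫ x in Ioi (0:ℝ), p x ^ q) - (1/σ)^q * (σ/(1+κ)) := by
      have E1 : (∫ x in Ioi (0:ℝ),
            ((1/(1+κ)) * (p x ^ q) + (κ/(σ*(1+κ))) * (x * p x ^ q)
              - ((1/(1+κ)) * (((1/σ) * (1 + κ*x/σ) ^ b0) ^ q)
                  + (κ/(σ*(1+κ))) * (x * ((1/σ) * (1 + κ*x/σ) ^ b0) ^ q))
              - (K * p x - K * ((1/σ) * (1 + κ*x/σ) ^ b0))))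
          = (∫ x in Ioi (0:ℝ),
            ((1/(1+κ)) * (p x ^ q) + (κ/(σ*(1+κ))) * (x * p x ^ q)
              - ((1/(1+κ)) * (((1/σ) * (1 + κ*x/σ) ^ b0) ^ q)
                  + (κ/(σ*(1+κ))) * (x * ((1/σ) * (1 + κ*x/σ) ^ b0) ^ q))))
            - (∫ x in Ioi (0:ℝ), (K * p x - K * ((1/σ) * (1 + κ*x/σ) ^ b0))) :=
        integral_sub ((J1.add J2).sub (J3.add J4)) (J5.sub J6)
      have E2 : (∫ x in Ioi (0:ℝ),
            ((1/(1+κ)) * (p x ^ q) + (κ/(σ*(1+κ))) * (x * p x ^ q)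
              - ((1/(1+κ)) * (((1/σ) * (1 + κ*x/σ) ^ b0) ^ q)
                  + (κ/(σ*(1+κ))) * (x * ((1/σ) * (1 + κ*x/σ) ^ b0) ^ q))))
          = (∫ x in Ioi (0:ℝ), ((1/(1+κ)) * (p x ^ q) + (κ/(σ*(1+κ))) * (x * p x ^ q)))
            - (∫ x in Ioi (0:ℝ), ((1/(1+κ)) * (((1/σ) * (1 + κ*x/σ) ^ b0) ^ q)
                  + (κ/(σ*(1+κ))) * (x * ((1/σ) * (1 + κ*x/σ) ^ b0) ^ q))) :=
        integral_sub (J1.add J2) (J3.add J4)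
      have E3 : (∫ x in Ioi (0:ℝ), ((1/(1+κ)) * (p x ^ q) + (κ/(σ*(1+κ))) * (x * p x ^ q)))
          = (∫ x in Ioi (0:ℝ), (1/(1+κ)) * (p x ^ q))
            + (∫ x in Ioi (0:ℝ), (κ/(σ*(1+κ))) * (x * p x ^ q)) := integral_add J1 J2
      have E4 : (∫ x in Ioi (0:ℝ), ((1/(1+κ)) * (((1/σ) * (1 + κ*x/σ) ^ b0) ^ q)
              + (κ/(σ*(1+κ))) * (x * ((1/σ) * (1 + κ*x/σ) ^ b0) ^ q)))
          = (∫ x in Ioi (0:ℝ), (1/(1+κ)) * (((1/σ) * (1 + κ*x/σ) ^ b0) ^ q))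
            + (∫ x in Ioi (0:ℝ), (κ/(σ*(1+κ))) * (x * ((1/σ) * (1 + κ*x/σ) ^ b0) ^ q)) :=
        integral_add J3 J4
      have E5 : (∫ x in Ioi (0:ℝ), (K * p x - K * ((1/σ) * (1 + κ*x/σ) ^ b0)))
          = (∫ x in Ioi (0:ℝ), K * p x)
            - (∫ x in Ioi (0:ℝ), K * ((1/σ) * (1 + κ*x/σ) ^ b0)) := integral_sub J5 J6
      have F1 : (∫ x in Ioi (0:ℝ), (1/(1+κ)) * (p x ^ q))
          = (1/(1+κ)) * ∫ x in Ioi (0:ℝ), p x ^ q := integral_const_mul _ _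
      have F2 : (∫ x in Ioi (0:ℝ), (κ/(σ*(1+κ))) * (x * p x ^ q))
          = (κ/(σ*(1+κ))) * ∫ x in Ioi (0:ℝ), x * p x ^ q := integral_const_mul _ _
      have F3 : (∫ x in Ioi (0:ℝ), (1/(1+κ)) * (((1/σ) * (1 + κ*x/σ) ^ b0) ^ q))
          = (1/(1+κ)) * ∫ x in Ioi (0:ℝ), ((1/σ) * (1 + κ*x/σ) ^ b0) ^ q :=
        integral_const_mul _ _
      have F4 : (∫ x in Ioi (0:ℝ), (κ/(σ*(1+κ))) * (x * ((1/σ) * (1 + κ*x/σ) ^ b0) ^ q))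
          = (κ/(σ*(1+κ))) * ∫ x in Ioi (0:ℝ), x * ((1/σ) * (1 + κ*x/σ) ^ b0) ^ q :=
        integral_const_mul _ _
      have F5 : (∫ x in Ioi (0:ℝ), K * p x) = K * ∫ x in Ioi (0:ℝ), p x :=
        integral_const_mul _ _
      have F6 : (∫ x in Ioi (0:ℝ), K * ((1/σ) * (1 + κ*x/σ) ^ b0))
          = K * ∫ x in Ioi (0:ℝ), (1/σ) * (1 + κ*x/σ) ^ b0 := integral_const_mul _ _
      rw [E1, E2, E3, E4, E5, F1, F2, F3, F4, F5, F6, hmean', vgq, vxgq, vg, hp1]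
      field_simp
      ring
    rw [hsum] at hnn
    rw [vgq]
    have hle : (1/σ:ℝ)^q * (σ/(1+κ)) ≤ ∫ x in Ioi (0:ℝ), p x ^ q := by linarith
    have hinv : (∫ x in Ioi (0:ℝ), p x ^ q)⁻¹ ≤ ((1/σ:ℝ)^q * (σ/(1+κ)))⁻¹ :=
      inv_anti₀ hIgpos hle
    have h0 : (0:ℝ) ≤ 1/κ := by positivity
    exact mul_le_mul_of_nonneg_left (by linarith) h0
  · rw [vgq]
    have hsig : σ ^ (κ/(1+κ)) = σ ^ (q-1) := by rw [hqm1]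
    have h1 : ((1/σ):ℝ)^q = (σ^q)⁻¹ := by rw [one_div, ← inv_rpow hσ.le, inv_rpow hσ.le]
    have h2 : σ ^ (q-1) = σ ^ q / σ := by rw [rpow_sub hσ, rpow_one]
    have hσq : 0 < σ ^ q := rpow_pos_of_pos hσ q
    rw [hsig, h1, h2]
    field_simp
    ring
end

section
/- Let κ > 0, β > 0, W ≥ 1, and let E₁, …, E_W ≥ 0 be energies. Define the coupled Boltzmann–Gibbs distribution p_i = (1/Z_κ)·(1 + κ·β·E_i)^(−(1+κ)/κ) with partition function Z_κ = Σ_{j=1}^W (1 + κ·β·E_j)^(−(1+κ)/κ), and the generalized internal energy U_κ = Σ_i P_i^(q)·E_i with q = 1 + κ/(1+κ) and P_i^(q) = p_i^q / Σ_j p_j^q. Then the Type I coupled entropy of p satisfies S_κ(p) = ln_κ(Z_κ^(1/(1+κ))) + β·U_κ + κ·ln_κ(Z_κ^(1/(1+κ)))·β·U_κ, i.e. S_κ(p) = ln_κ(Z_κ^(1/(1+κ))) ⊕_κ β·U_κ. -/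
open Real

/-- Thermodynamic relation for the coupled Boltzmann–Gibbs distribution
`p_i = (1/Z_κ)·(1 + κ·β·E_i)^(−(1+κ)/κ)` with partition function
`Z_κ = Σ_j (1 + κ·β·E_j)^(−(1+κ)/κ)`: the Type I coupled entropy of `p` equals
the coupled sum `ln_κ(Z_κ^(1/(1+κ))) ⊕_κ β·U_κ`, where `U_κ = Σ_i P_i^(q)·E_i`
is the generalized internal energy with escort exponent `q = 1 + κ/(1+κ)` and
`ln_κ(x) = (x^κ − 1)/κ`, and `a ⊕_κ b = a + b + κ·a·b`. -/
theorem stmt_19 (κ β : ℝ) (hκ : 0 < κ) (hβ : 0 < β)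
    (W : ℕ) (hW : 1 ≤ W) (E : Fin W → ℝ) (hE : ∀ i, 0 ≤ E i) :
    let Z : ℝ := ∑ j, (1 + κ * (β * E j)) ^ (-(1 + κ) / κ)
    let p : Fin W → ℝ := fun i => (1 / Z) * (1 + κ * (β * E i)) ^ (-(1 + κ) / κ)
    let q : ℝ := 1 + κ / (1 + κ)
    let U : ℝ := ∑ i, (p i ^ q / ∑ j, p j ^ q) * E i
    let lnκZ : ℝ := ((Z ^ ((1 : ℝ) / (1 + κ))) ^ κ - 1) / κ
    ∑ i, (p i ^ q / ∑ j, p j ^ q) * (((p i ^ (-(1 / (1 + κ)))) ^ κ - 1) / κ)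
      = lnκZ + β * U + κ * lnκZ * (β * U) := by
  intro Z p q U lnκZ
  have hκ1 : (0:ℝ) < 1 + κ := by linarith
  have ht : ∀ i, (0:ℝ) < 1 + κ * (β * E i) := fun i => by
    have h1 : 0 ≤ κ * (β * E i) := by have := hE i; positivity
    linarith
  have ha : ∀ i, (0:ℝ) < (1 + κ * (β * E i)) ^ (-(1 + κ) / κ) :=
    fun i => Real.rpow_pos_of_pos (ht i) _
  have hne : (Finset.univ : Finset (Fin W)).Nonempty := by
    have : Nonempty (Fin W) := Fin.pos_iff_nonempty.mp hW
    exact Finset.univ_nonempty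
  have hZ : 0 < Z := Finset.sum_pos (fun i _ => ha i) hne
  have hp : ∀ i, 0 < p i := fun i => by
    have := ha i
    simp only [p]
    positivity
  have hS : 0 < ∑ j, p j ^ q :=
    Finset.sum_pos (fun j _ => Real.rpow_pos_of_pos (hp j) q) hne
  set c : ℝ := Z ^ ((1:ℝ) / (1 + κ) * κ) with hc
  have hZc : (Z ^ ((1:ℝ) / (1 + κ))) ^ κ = c := (Real.rpow_mul hZ.le _ _).symm
  have key : ∀ i, (p i ^ (-(1 / (1 + κ)))) ^ κ = c * (1 + κ * (β * E i)) := by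
    intro i
    have h1 : (p i ^ (-(1 / (1 + κ)))) ^ κ = p i ^ (-(1 / (1 + κ)) * κ) :=
      (Real.rpow_mul (hp i).le _ _).symm
    rw [h1]
    show ((1 / Z) * (1 + κ * (β * E i)) ^ (-(1 + κ) / κ)) ^ (-(1 / (1 + κ)) * κ) = _
    rw [Real.mul_rpow (by positivity) (ha i).le,
      ← Real.rpow_mul (ht i).le]
    rw [one_div, Real.inv_rpow hZ.le, ← Real.rpow_neg hZ.le]
    have he : -(1 + κ) / κ * (-(1 / (1 + κ)) * κ) = 1 := by
      field_simp
    have he2 : -(-(1 / (1 + κ)) * κ) = (1:ℝ) / (1 + κ) * κ := by ring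
    rw [he, he2, Real.rpow_one]
  have hPsum : ∑ i, p i ^ q / (∑ j, p j ^ q) = 1 := by
    rw [← Finset.sum_div, div_self hS.ne']
  have hln : lnκZ = (c - 1) / κ := by
    simp only [lnκZ, hZc]
  calc ∑ i, (p i ^ q / ∑ j, p j ^ q) * (((p i ^ (-(1 / (1 + κ)))) ^ κ - 1) / κ)
      = ∑ i, ((p i ^ q / ∑ j, p j ^ q) * ((c - 1) / κ)
          + c * β * ((p i ^ q / ∑ j, p j ^ q) * E i)) := by
        apply Finset.sum_congr rfl
        intro i _
        rw [key i]
        field_simp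
        ring
    _ = (∑ i, p i ^ q / (∑ j, p j ^ q)) * ((c - 1) / κ) + c * β * U := by
        rw [Finset.sum_add_distrib, ← Finset.sum_mul, ← Finset.mul_sum]
    _ = lnκZ + β * U + κ * lnκZ * (β * U) := by
        rw [hPsum, hln]
        field_simp
        ring
end
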